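/- Let C = ⟨Tree, ⊴, Choice⟩ be a stit frame for Ag and let CS be a constant specification. Then every model M ∈ Mod_CS({C}) validates every formula A with ⊢_CS A if and only if C is a mixed successor frame. -/

import Mathlib

/-! Preliminaries: temporal frames, stit frames, jstit frames, the language of
JA-STIT, jstit models, satisfaction, and the Hilbert system Σ_D(CS). -/

/-- A temporal frame: a nonempty set of moments with a partial order satisfying
historical connection and no backward branching. -/
structure TemporalFrame (Mo : Type) : Type where
  le : Mo → Mo → Prop
  le_refl : ∀ m, le m m
  le_antisymm : ∀ {m m'}, le m m' → le m' m → m = m'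
  le_trans : ∀ {m1 m2 m3}, le m1 m2 → le m2 m3 → le m1 m3
  nonempty : Nonempty Mo
  hist_conn : ∀ m m1, ∃ m2, le m2 m ∧ le m2 m1
  no_backward : ∀ m m1 m2, le m1 m → le m2 m → le m1 m2 ∨ le m2 m1

namespace TemporalFrame

variable {Mo : Type} (T : TemporalFrame Mo)

/-- The strict companion of the temporal order. -/
def lt (m m' : Mo) : Prop := T.le m m' ∧ m ≠ m'

/-- A history is a maximal chain of moments w.r.t. the temporal order. -/
def IsHistory (h : Set Mo) : Prop :=
  IsChain T.le h ∧ ∀ h' : Set Mo, IsChain T.le h' → h ⊆ h' → h' = h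

/-- `T.H m` is the set of histories passing through the moment `m`. -/
def H (m : Mo) : Set (Set Mo) := { h | T.IsHistory h ∧ m ∈ h }

/-- Histories `h` and `g` are undivided at `m`. -/
def Undiv (m : Mo) (h g : Set Mo) : Prop := ∃ m', T.lt m m' ∧ m' ∈ h ∧ m' ∈ g

/-- `m'` is an immediate successor of `m`. -/
def Next (m m' : Mo) : Prop := T.lt m m' ∧ ∀ m'', T.lt m'' m' → T.le m'' m

/-- Mixed successor condition on (the temporal part of) a frame. -/
def MixSucc : Prop :=
  ∀ m m1 : Mo,
    (T.lt m m1 → ∃ m2, T.le m2 m1 ∧ T.Next m m2) ∨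
    (∀ h ∈ T.H m, ∀ g ∈ T.H m, T.Undiv m h g)

end TemporalFrame

/-- A stit frame for an agent community `Ag`: a temporal frame together with a choice
function assigning to each moment and agent a partition of the histories through that
moment, subject to no choice between undivided histories and independence of agents. -/
structure StitFrame (Mo : Type) (Ag : Type) extends TemporalFrame Mo where
  choice : Mo → Ag → Set (Set (Set Mo))
  choice_cell_nonempty : ∀ m j C, C ∈ choice m j → C.Nonempty
  choice_cell_sub : ∀ m j C, C ∈ choice m j → C ⊆ toTemporalFrame.H m
  choice_cover : ∀ m j h, h ∈ toTemporalFrame.H m → ∃ C ∈ choice m j, h ∈ C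
  choice_disjoint : ∀ m j C C', C ∈ choice m j → C' ∈ choice m j →
    (C ∩ C').Nonempty → C = C'
  no_choice_undiv : ∀ m j h h', h ∈ toTemporalFrame.H m → h' ∈ toTemporalFrame.H m →
    toTemporalFrame.Undiv m h h' → ∀ C ∈ choice m j, h ∈ C → h' ∈ C
  independence : ∀ m (f : Ag → Set (Set Mo)), (∀ j, f j ∈ choice m j) →
    (⋂ j, f j).Nonempty

/-- A justification stit (jstit) frame for `Ag`: a stit frame together with two
epistemic preorders `R ⊆ R_e`, with the temporal order included in `R`. -/
structure JstitFrame (Mo : Type) (Ag : Type) extends StitFrame Mo Ag where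
  R : Mo → Mo → Prop
  Re : Mo → Mo → Prop
  R_refl : ∀ m, R m m
  R_trans : ∀ {m1 m2 m3}, R m1 m2 → R m2 m3 → R m1 m3
  Re_refl : ∀ m, Re m m
  Re_trans : ∀ {m1 m2 m3}, Re m1 m2 → Re m2 m3 → Re m1 m3
  R_sub_Re : ∀ {m m'}, R m m' → Re m m'
  le_sub_R : ∀ {m m'}, le m m' → R m m'

namespace JstitFrame

variable {Mo : Type} {Ag : Type} (F : JstitFrame Mo Ag)

/-- The family `Θ_m` of subsets of the set of moments associated with a moment `m`. -/
def Theta (m : Mo) : Set (Set Mo) :=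
  { S | m ∈ S ∧
    (∀ m1 m2, m1 ∈ S → F.Re m1 m2 → m2 ∈ S) ∧
    (∀ m1, (∀ h ∈ F.toTemporalFrame.H m1,
        ∃ m2 ∈ h, F.toTemporalFrame.Next m1 m2 ∧ m2 ∈ S) → m1 ∈ S) ∧
    (∀ m1, m1 ∈ S →
      (∀ m2, F.toTemporalFrame.lt m2 m1 →
        ∃ m3, F.toTemporalFrame.lt m2 m3 ∧ F.toTemporalFrame.lt m3 m1) →
      ∃ m4, F.toTemporalFrame.lt m4 m1 ∧ m4 ∈ S) }

/-- A jstit frame is unirelational iff `R_e ⊆ R`. -/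
def Unirelational : Prop := ∀ m m', F.Re m m' → F.R m m'

/-- Regularity of a jstit frame. -/
def Regular : Prop :=
  ∀ m m1 : Mo, F.toTemporalFrame.lt m m1 →
    (∃ S : Set Mo,
      (∀ m0, F.toTemporalFrame.lt m m0 → F.le m0 m1 → S ∈ F.Theta m0) ∧
      m ∉ S ∧
      ∃ h' ∈ F.toTemporalFrame.H m,
        (∀ g ∈ F.toTemporalFrame.H m1, ¬ F.toTemporalFrame.Undiv m h' g) ∧
        (∀ m' ∈ h', F.toTemporalFrame.Next m m' → m' ∉ S)) →
    ∃ m2, F.le m2 m1 ∧ F.toTemporalFrame.Next m m2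

end JstitFrame

/-- Proof polynomials over proof variables `PVar` and proof constants `PConst`. -/
inductive Pol (PVar PConst : Type) : Type
  | var : PVar → Pol PVar PConst
  | const : PConst → Pol PVar PConst
  | plus : Pol PVar PConst → Pol PVar PConst → Pol PVar PConst
  | times : Pol PVar PConst → Pol PVar PConst → Pol PVar PConst
  | bang : Pol PVar PConst → Pol PVar PConst

/-- Formulas of JA-STIT. -/
inductive Form (Ag PVar PConst PropVar : Type) : Type
  | pv : PropVar → Form Ag PVar PConst PropVar
  | and : Form Ag PVar PConst PropVar → Form Ag PVar PConst PropVar →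
      Form Ag PVar PConst PropVar
  | neg : Form Ag PVar PConst PropVar → Form Ag PVar PConst PropVar
  | stit : Ag → Form Ag PVar PConst PropVar → Form Ag PVar PConst PropVar
  | box : Form Ag PVar PConst PropVar → Form Ag PVar PConst PropVar
  | proves : Pol PVar PConst → Form Ag PVar PConst PropVar → Form Ag PVar PConst PropVar
  | know : Form Ag PVar PConst PropVar → Form Ag PVar PConst PropVar
  | ann : Pol PVar PConst → Form Ag PVar PConst PropVar

namespace Form

variable {Ag PVar PConst PropVar : Type}

/-- Implication, defined as usual from `¬` and `∧`. -/
def imp (A B : Form Ag PVar PConst PropVar) : Form Ag PVar PConst PropVar :=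
  neg (and A (neg B))

/-- Disjunction, defined as usual. -/
def or (A B : Form Ag PVar PConst PropVar) : Form Ag PVar PConst PropVar :=
  neg (and (neg A) (neg B))

/-- The dual `◇` of the historical necessity modality. -/
def dia (A : Form Ag PVar PConst PropVar) : Form Ag PVar PConst PropVar :=
  neg (box (neg A))

/-- Falsum, defined as usual. -/
def bot [Inhabited PropVar] : Form Ag PVar PConst PropVar :=
  and (pv default) (neg (pv default))

end Form

/-- Conjunction of a nonempty list of formulas (head plus tail). -/
def andList {Ag PVar PConst PropVar : Type} :
    Form Ag PVar PConst PropVar → List (Form Ag PVar PConst PropVar) →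
      Form Ag PVar PConst PropVar
  | A, [] => A
  | A, B :: L => Form.and A (andList B L)

/-- Disjunction of a list of formulas. -/
def bigOr {Ag PVar PConst PropVar : Type} [Inhabited PropVar] :
    List (Form Ag PVar PConst PropVar) → Form Ag PVar PConst PropVar
  | [] => Form.bot
  | [A] => A
  | A :: B :: L => Form.or A (bigOr (B :: L))

/-- A classical propositional tautology: a formula true under every Boolean valuation
commuting with `∧` and `¬` (all other formulas being treated as atoms). -/
def Tautology {Ag PVar PConst PropVar : Type} (A : Form Ag PVar PConst PropVar) : Prop :=
  ∀ v : Form Ag PVar PConst PropVar → Bool,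
    (∀ B C, v (Form.and B C) = (v B && v C)) →
    (∀ B, v (Form.neg B) = !v B) →
    v A = true

/-- The axiom schemes (A0)–(A9) of Σ_D. -/
inductive Ax {Ag PVar PConst PropVar : Type} : Form Ag PVar PConst PropVar → Prop
  -- (A0) classical propositional tautologies
  | a0 {A} : Tautology A → Ax A
  -- (A1) S5 axioms for □
  | boxK {A B} : Ax (Form.imp (Form.box (Form.imp A B))
      (Form.imp (Form.box A) (Form.box B)))
  | boxT {A} : Ax (Form.imp (Form.box A) A)
  | box4 {A} : Ax (Form.imp (Form.box A) (Form.box (Form.box A)))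
  | box5 {A} : Ax (Form.imp (Form.neg (Form.box A)) (Form.box (Form.neg (Form.box A))))
  -- (A1) S5 axioms for each [j]
  | stitK {j : Ag} {A B} : Ax (Form.imp (Form.stit j (Form.imp A B))
      (Form.imp (Form.stit j A) (Form.stit j B)))
  | stitT {j : Ag} {A} : Ax (Form.imp (Form.stit j A) A)
  | stit4 {j : Ag} {A} : Ax (Form.imp (Form.stit j A) (Form.stit j (Form.stit j A)))
  | stit5 {j : Ag} {A} : Ax (Form.imp (Form.neg (Form.stit j A))
      (Form.stit j (Form.neg (Form.stit j A))))
  -- (A2)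
  | a2 {j : Ag} {A} : Ax (Form.imp (Form.box A) (Form.stit j A))
  -- (A3), for pairwise distinct agents
  | a3 {p : Ag × Form Ag PVar PConst PropVar} {L : List (Ag × Form Ag PVar PConst PropVar)} :
      (((p :: L).map Prod.fst).Nodup) →
      Ax (Form.imp
        (andList (Form.dia (Form.stit p.1 p.2)) (L.map fun q => Form.dia (Form.stit q.1 q.2)))
        (Form.dia (andList (Form.stit p.1 p.2) (L.map fun q => Form.stit q.1 q.2))))
  -- (A4)
  | a4 {s t : Pol PVar PConst} {A B} : Ax (Form.imp (Form.proves s (Form.imp A B))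
      (Form.imp (Form.proves t A) (Form.proves (Pol.times s t) B)))
  -- (A5)
  | a5 {t : Pol PVar PConst} {A} : Ax (Form.imp (Form.proves t A)
      (Form.and (Form.proves (Pol.bang t) (Form.proves t A)) (Form.know A)))
  -- (A6)
  | a6 {s t : Pol PVar PConst} {A} : Ax (Form.imp
      (Form.or (Form.proves s A) (Form.proves t A)) (Form.proves (Pol.plus s t) A))
  -- (A7) S4 axioms for K
  | knowK {A B} : Ax (Form.imp (Form.know (Form.imp A B))
      (Form.imp (Form.know A) (Form.know B)))
  | knowT {A} : Ax (Form.imp (Form.know A) A)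
  | know4 {A} : Ax (Form.imp (Form.know A) (Form.know (Form.know A)))
  -- (A8)
  | a8 {A} : Ax (Form.imp (Form.know A) (Form.box (Form.know (Form.box A))))
  -- (A9)
  | a9 {t : Pol PVar PConst} : Ax (Form.imp (Form.box (Form.ann t))
      (Form.know (Form.box (Form.ann t))))

/-- Iterated prefixes `c_n : … : c_1 : A` of instances `A` of the axiom schemes. -/
inductive ConstIter {Ag PVar PConst PropVar : Type} : Form Ag PVar PConst PropVar → Prop
  | base {c : PConst} {A} : Ax A → ConstIter (Form.proves (Pol.const c) A)
  | step {c : PConst} {B} : ConstIter B → ConstIter (Form.proves (Pol.const c) B)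

/-- A constant specification: a set of formulas of the form `c_n : … : c_1 : A` with `A`
an instance of (A0)–(A9), closed under deleting the outermost constant. -/
def IsConstSpec {Ag PVar PConst PropVar : Type}
    (CS : Set (Form Ag PVar PConst PropVar)) : Prop :=
  (∀ B ∈ CS, ConstIter B) ∧
  ∀ (c c' : PConst) (B : Form Ag PVar PConst PropVar),
    Form.proves (Pol.const c) (Form.proves (Pol.const c') B) ∈ CS →
    Form.proves (Pol.const c') B ∈ CS

/-- Provability in Σ_D(CS): axioms (A0)–(A9), modus ponens (R1), K-necessitation (R2),
the rule (R_D) and the rule (R_CS). -/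
inductive Proves {Ag PVar PConst PropVar : Type} [Inhabited PropVar]
    (CS : Set (Form Ag PVar PConst PropVar)) : Form Ag PVar PConst PropVar → Prop
  | ax {A} : Ax A → Proves CS A
  | mp {A B} : Proves CS (Form.imp A B) → Proves CS A → Proves CS B
  | nec {A} : Proves CS A → Proves CS (Form.know A)
  | rd {A : Form Ag PVar PConst PropVar} {ts ss : List (Pol PVar PConst)}
      (hne : ts ++ ss ≠ []) :
      Proves CS (Form.imp (Form.know A)
        (bigOr ((ts.map fun t => Form.neg (Form.box (Form.ann t))) ++
                (ss.map fun s => Form.box (Form.ann s))))) →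
      Proves CS (Form.imp (Form.know A)
        (bigOr ((ts.map fun t => Form.neg (Form.ann t)) ++
                (ss.map fun s => Form.ann s))))
  | rcs {B} : B ∈ CS → Proves CS B

/-- Γ is consistent in Σ_D(CS): no finite nonempty conjunction of members of Γ provably
implies falsum. -/
def CSConsistent {Ag PVar PConst PropVar : Type} [Inhabited PropVar]
    (CS Γ : Set (Form Ag PVar PConst PropVar)) : Prop :=
  ¬ ∃ (A : Form Ag PVar PConst PropVar) (L : List (Form Ag PVar PConst PropVar)),
      A ∈ Γ ∧ (∀ B ∈ L, B ∈ Γ) ∧ Proves CS (Form.imp (andList A L) Form.bot)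

/-- A jstit model for `Ag`: a jstit frame together with `Act`, an admissible evidence
function `E` and an evaluation `V`, subject to the semantical constraints. -/
structure JstitModel (Mo : Type) (Ag PVar PConst PropVar : Type)
    extends JstitFrame Mo Ag where
  act : Mo → Set Mo → Set (Pol PVar PConst)
  ev : Mo → Pol PVar PConst → Set (Form Ag PVar PConst PropVar)
  val : PropVar → Set (Mo × Set Mo)
  -- monotonicity of evidence
  ev_mono : ∀ m m' t, Re m m' → ev m t ⊆ ev m' t
  -- evidence closure properties
  ev_app : ∀ m s t A B, Form.imp A B ∈ ev m s → A ∈ ev m t → B ∈ ev m (Pol.times s t)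
  ev_sum_left : ∀ m s t, ev m s ⊆ ev m (Pol.plus s t)
  ev_sum_right : ∀ m s t, ev m t ⊆ ev m (Pol.plus s t)
  ev_bang : ∀ m t A, A ∈ ev m t → Form.proves t A ∈ ev m (Pol.bang t)
  -- expansion of presented proofs
  expansion : ∀ m m' h, toTemporalFrame.lt m' m → h ∈ toTemporalFrame.H m →
    act m' h ⊆ act m h
  -- no new proofs guaranteed
  no_new : ∀ m t, (∀ h ∈ toTemporalFrame.H m, t ∈ act m h) →
    ∃ m' h, toTemporalFrame.lt m' m ∧ h ∈ toTemporalFrame.H m ∧ t ∈ act m' h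
  -- presenting a new proof makes histories divide
  divide : ∀ m h h', h ∈ toTemporalFrame.H m → h' ∈ toTemporalFrame.H m →
    toTemporalFrame.Undiv m h h' → act m h = act m h'
  -- presented proofs are epistemically transparent
  transparent : ∀ m m' t, Re m m' → (∀ h ∈ toTemporalFrame.H m, t ∈ act m h) →
    ∀ h' ∈ toTemporalFrame.H m', t ∈ act m' h'

namespace JstitModel

variable {Mo Ag PVar PConst PropVar : Type}

/-- `Act_m`, the set of proofs presented at `m` under every history through `m`. -/
def ActM (M : JstitModel Mo Ag PVar PConst PropVar) (m : Mo) : Set (Pol PVar PConst) :=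
  { t | ∀ h ∈ M.toTemporalFrame.H m, t ∈ M.act m h }

/-- The satisfaction relation for jstit models. -/
def Sat (M : JstitModel Mo Ag PVar PConst PropVar) :
    Form Ag PVar PConst PropVar → Mo → Set Mo → Prop
  | Form.pv p, m, h => (m, h) ∈ M.val p
  | Form.and A B, m, h => M.Sat A m h ∧ M.Sat B m h
  | Form.neg A, m, h => ¬ M.Sat A m h
  | Form.stit j A, m, h => ∀ h' C, C ∈ M.choice m j → h ∈ C → h' ∈ C → M.Sat A m h'
  | Form.box A, m, _ => ∀ h' ∈ M.toTemporalFrame.H m, M.Sat A m h'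
  | Form.know A, m, _ => ∀ m' h', M.R m m' → h' ∈ M.toTemporalFrame.H m' → M.Sat A m' h'
  | Form.proves t A, m, _ => A ∈ M.ev m t ∧
      ∀ m' h', M.Re m m' → h' ∈ M.toTemporalFrame.H m' → M.Sat A m' h'
  | Form.ann t, m, h => t ∈ M.act m h

/-- Validity of a formula in a jstit model. -/
def Valid (M : JstitModel Mo Ag PVar PConst PropVar)
    (A : Form Ag PVar PConst PropVar) : Prop :=
  ∀ m h, h ∈ M.toTemporalFrame.H m → M.Sat A m h

end JstitModel

/-- CS-normality of a jstit model. -/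
def CSNormal {Mo Ag PVar PConst PropVar : Type}
    (CS : Set (Form Ag PVar PConst PropVar))
    (M : JstitModel Mo Ag PVar PConst PropVar) : Prop :=
  ∀ (c : PConst) (m : Mo) (A : Form Ag PVar PConst PropVar),
    Form.proves (Pol.const c) A ∈ CS → A ∈ M.ev m (Pol.const c)


set_option linter.unusedSectionVars false

section TemporalLemmas

namespace TemporalFrame

variable {Mo : Type} {T : TemporalFrame Mo}

lemma IsHistory.chain {h : Set Mo} (hh : T.IsHistory h) : IsChain T.le h := hh.1

lemma IsHistory.max {h : Set Mo} (hh : T.IsHistory h) :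
    ∀ h' : Set Mo, IsChain T.le h' → h ⊆ h' → h' = h := hh.2

lemma hist_of_mem_H {m : Mo} {h : Set Mo} (hh : h ∈ T.H m) : T.IsHistory h := hh.1

lemma mem_of_mem_H {m : Mo} {h : Set Mo} (hh : h ∈ T.H m) : m ∈ h := hh.2

lemma mem_H_iff {m : Mo} {h : Set Mo} : h ∈ T.H m ↔ T.IsHistory h ∧ m ∈ h := Iff.rfl

lemma lt_of_lt_of_le {a b c : Mo} (h1 : T.lt a b) (h2 : T.le b c) : T.lt a c := by
  refine ⟨T.le_trans h1.1 h2, fun hac => ?_⟩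
  subst hac
  exact h1.2 (T.le_antisymm h1.1 h2)

lemma lt_of_le_of_lt {a b c : Mo} (h1 : T.le a b) (h2 : T.lt b c) : T.lt a c := by
  refine ⟨T.le_trans h1 h2.1, fun hac => ?_⟩
  subst hac
  exact h2.2 (T.le_antisymm h2.1 h1)

/-- Any lower bound of a member of a history belongs to the history. -/
lemma mem_of_le {q p : Mo} {h : Set Mo} (hqp : T.le q p) (hh : T.IsHistory h)
    (hp : p ∈ h) : q ∈ h := by
  have hchain : IsChain T.le (insert q h) := by
    refine hh.chain.insert fun b hb hne => ?_
    by_cases hbp : b = p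
    · subst hbp; exact Or.inl hqp
    · rcases hh.chain hb hp hbp with hbp' | hpb
      · rcases T.no_backward p b q hbp' hqp with h1 | h1
        · exact Or.inr h1
        · exact Or.inl h1
      · exact Or.inl (T.le_trans hqp hpb)
  have := hh.max _ hchain (Set.subset_insert q h)
  rw [← this]; exact Set.mem_insert q h

/-- Every moment lies on some history. -/
lemma exists_history (m : Mo) : ∃ h, h ∈ T.H m := by
  obtain ⟨M, hM, hsub⟩ := (IsChain.singleton (r := T.le) (a := m)).exists_maxChain
  exact ⟨M, ⟨⟨hM.1, fun h' hc hsub' => (hM.2 hc hsub').symm⟩, hsub rfl⟩⟩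

lemma H_mono {m m2 : Mo} {g : Set Mo} (hle : T.le m m2) (hg : g ∈ T.H m2) :
    g ∈ T.H m := ⟨hist_of_mem_H hg, mem_of_le hle (hist_of_mem_H hg) (mem_of_mem_H hg)⟩

lemma undiv_symm {m : Mo} {a b : Set Mo} (h : T.Undiv m a b) : T.Undiv m b a := by
  obtain ⟨p, h1, h2, h3⟩ := h; exact ⟨p, h1, h3, h2⟩

lemma undiv_trans {m : Mo} {a b c : Set Mo} (ha : T.IsHistory a) (hb : T.IsHistory b)
    (hc : T.IsHistory c) (hab : T.Undiv m a b) (hbc : T.Undiv m b c) :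
    T.Undiv m a c := by
  obtain ⟨p, hmp, hpa, hpb⟩ := hab
  obtain ⟨q, hmq, hqb, hqc⟩ := hbc
  by_cases hpq : p = q
  · subst hpq; exact ⟨p, hmp, hpa, hqc⟩
  · rcases hb.chain hpb hqb hpq with hle | hle
    · exact ⟨p, hmp, hpa, mem_of_le hle hc hqc⟩
    · exact ⟨q, hmq, mem_of_le hle ha hpa, hqc⟩

/-- If `m` has a strict successor, every history through `m` contains a moment
strictly above `m`. -/
lemma exists_gt_of_lt {m m1 : Mo} {h : Set Mo} (hlt : T.lt m m1) (hh : h ∈ T.H m) :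
    ∃ x ∈ h, T.lt m x := by
  by_contra hcon
  push_neg at hcon
  have hchain : IsChain T.le (insert m1 h) := by
    refine (hist_of_mem_H hh).chain.insert fun b hb hne => ?_
    by_cases hbm : b = m
    · subst hbm; exact Or.inr hlt.1
    · rcases (hist_of_mem_H hh).chain hb (mem_of_mem_H hh) hbm with hle | hle
      · exact Or.inr (T.le_trans hle hlt.1)
      · exact absurd ⟨hle, fun he => hbm he.symm⟩ (hcon b hb)
  have := (hist_of_mem_H hh).max _ hchain (Set.subset_insert m1 h)
  have hm1 : m1 ∈ h := by rw [← this]; exact Set.mem_insert m1 h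
  exact hcon m1 hm1 hlt

/-- If `m` has no strict successor at all, then all histories through `m` coincide. -/
lemma history_eq_of_maximal {m : Mo} {h h' : Set Mo} (hmax : ∀ x, ¬ T.lt m x)
    (hh : h ∈ T.H m) (hh' : h' ∈ T.H m) : h' = h := by
  have key : ∀ k ∈ T.H m, k = {x | T.le x m} := by
    intro k hk
    have hsub : k ⊆ {x | T.le x m} := by
      intro y hy
      by_cases hym : y = m
      · subst hym; exact T.le_refl y
      · rcases (hist_of_mem_H hk).chain hy (mem_of_mem_H hk) hym with hle | hle
        · exact hle
        · exact absurd ⟨hle, fun he => hym he.symm⟩ (hmax y)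
    have hchain : IsChain T.le {x | T.le x m} := by
      intro x hx y hy hne
      exact T.no_backward m x y hx hy
    exact ((hist_of_mem_H hk).max _ hchain hsub).symm
  rw [key h' hh', key h hh]

lemma next_of_no_between {m n : Mo} (hlt : T.lt m n)
    (hno : ∀ n', ¬ (T.lt m n' ∧ T.lt n' n)) : T.Next m n := by
  refine ⟨hlt, fun m'' h'' => ?_⟩
  rcases T.no_backward n m'' m h''.1 hlt.1 with hle | hle
  · exact hle
  · by_cases hm : m = m''
    · subst hm; exact T.le_refl m
    · exact absurd ⟨⟨hle, hm⟩, h''⟩ (hno m'')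

end TemporalFrame

end TemporalLemmas
section SatLemmas

namespace JstitModel

open Classical

variable {Mo Ag PVar PConst PropVar : Type} {M : JstitModel Mo Ag PVar PConst PropVar}
variable {A B : Form Ag PVar PConst PropVar} {m : Mo} {h : Set Mo}

lemma sat_and : M.Sat (Form.and A B) m h ↔ (M.Sat A m h ∧ M.Sat B m h) := Iff.rfl

lemma sat_neg : M.Sat (Form.neg A) m h ↔ ¬ M.Sat A m h := Iff.rfl

lemma sat_imp : M.Sat (Form.imp A B) m h ↔ (M.Sat A m h → M.Sat B m h) := by
  rw [Form.imp, sat_neg, sat_and, sat_neg]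
  tauto

lemma sat_or : M.Sat (Form.or A B) m h ↔ (M.Sat A m h ∨ M.Sat B m h) := by
  rw [Form.or, sat_neg, sat_and, sat_neg, sat_neg]
  tauto

lemma sat_dia : M.Sat (Form.dia A) m h ↔ ∃ h' ∈ M.toTemporalFrame.H m, M.Sat A m h' := by
  rw [Form.dia, sat_neg]
  show (¬ ∀ h' ∈ M.toTemporalFrame.H m, ¬ M.Sat A m h') ↔ _
  push_neg
  rfl

lemma sat_bot [Inhabited PropVar] : ¬ M.Sat (Form.bot : Form Ag PVar PConst PropVar) m h := by
  rw [Form.bot, sat_and, sat_neg]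
  tauto

lemma sat_andList {L : List (Form Ag PVar PConst PropVar)} :
    M.Sat (andList A L) m h ↔ (M.Sat A m h ∧ ∀ B ∈ L, M.Sat B m h) := by
  induction L generalizing A with
  | nil => simp [andList]
  | cons B L ih =>
      rw [andList, sat_and, ih]
      simp only [List.mem_cons]
      constructor
      · rintro ⟨h1, h2, h3⟩
        exact ⟨h1, fun C hC => hC.elim (fun he => he ▸ h2) (h3 C)⟩
      · rintro ⟨h1, h2⟩
        exact ⟨h1, h2 B (Or.inl rfl), fun C hC => h2 C (Or.inr hC)⟩

lemma sat_bigOr [Inhabited PropVar] {L : List (Form Ag PVar PConst PropVar)} :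
    M.Sat (bigOr L) m h ↔ ∃ B ∈ L, M.Sat B m h := by
  induction L with
  | nil => simp [bigOr, sat_bot]
  | cons A L ih =>
      cases L with
      | nil => simp [bigOr]
      | cons B L' =>
          rw [bigOr, sat_or, ih]
          simp only [List.mem_cons]
          constructor
          · rintro (h1 | ⟨C, hC, h2⟩)
            · exact ⟨A, Or.inl rfl, h1⟩
            · exact ⟨C, Or.inr hC, h2⟩
          · rintro ⟨C, (rfl | hC), h2⟩
            · exact Or.inl h2
            · exact Or.inr ⟨C, hC, h2⟩

end JstitModel

end SatLemmas
section AxValid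

namespace JstitModel

open Classical TemporalFrame

variable {Mo Ag PVar PConst PropVar : Type} {M : JstitModel Mo Ag PVar PConst PropVar}

lemma ax_valid {A : Form Ag PVar PConst PropVar} (hA : Ax A) :
    ∀ m h, h ∈ M.toTemporalFrame.H m → M.Sat A m h := by
  induction hA with
  | @a0 A htaut =>
      intro m h _
      have hv := htaut (fun B => if M.Sat B m h then true else false) ?_ ?_
      · by_cases hs : M.Sat A m h
        · exact hs
        · exact absurd ((if_neg hs).symm.trans hv) (by simp)
      · intro B C
        show (if M.Sat (Form.and B C) m h then true else false)
          = ((if M.Sat B m h then true else false) && (if M.Sat C m h then true else false))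
        by_cases h1 : M.Sat B m h <;> by_cases h2 : M.Sat C m h
        · rw [if_pos h1, if_pos h2, if_pos (show M.Sat (Form.and B C) m h from ⟨h1, h2⟩)]; rfl
        · rw [if_pos h1, if_neg h2, if_neg (show ¬ M.Sat (Form.and B C) m h from fun hc => h2 hc.2)]; rfl
        · rw [if_neg h1, if_pos h2, if_neg (show ¬ M.Sat (Form.and B C) m h from fun hc => h1 hc.1)]; rfl
        · rw [if_neg h1, if_neg h2, if_neg (show ¬ M.Sat (Form.and B C) m h from fun hc => h1 hc.1)]; rfl
      · intro B
        show (if M.Sat (Form.neg B) m h then true else false)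
          = !(if M.Sat B m h then true else false)
        by_cases h1 : M.Sat B m h
        · rw [if_pos h1, if_neg (show ¬ M.Sat (Form.neg B) m h from fun hc => hc h1)]; rfl
        · rw [if_neg h1, if_pos (show M.Sat (Form.neg B) m h from h1)]; rfl
  | @boxK A B =>
      intro m h _
      rw [sat_imp]
      intro h1
      rw [sat_imp]
      intro h2 h' hh'
      exact sat_imp.1 (h1 h' hh') (h2 h' hh')
  | @boxT A =>
      intro m h hh
      rw [sat_imp]
      intro h1
      exact h1 h hh
  | @box4 A =>
      intro m h _
      rw [sat_imp]
      intro h1 h' _ h'' hh''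
      exact h1 h'' hh''
  | @box5 A =>
      intro m h _
      rw [sat_imp]
      intro h1 h' _
      exact h1
  | @stitK j A B =>
      intro m h _
      rw [sat_imp]; intro h1; rw [sat_imp]; intro h2
      intro h' C hC hhC hh'C
      exact sat_imp.1 (h1 h' C hC hhC hh'C) (h2 h' C hC hhC hh'C)
  | @stitT j A =>
      intro m h hh
      rw [sat_imp]; intro h1
      obtain ⟨C, hC, hhC⟩ := M.choice_cover m j h hh
      exact h1 h C hC hhC hhC
  | @stit4 j A =>
      intro m h _
      rw [sat_imp]; intro h1
      intro h2 C hC hhC h2C h3 C' hC' h2C' h3C'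
      have hCC' : C = C' := M.choice_disjoint m j C C' hC hC' ⟨h2, h2C, h2C'⟩
      subst hCC'
      exact h1 h3 C hC hhC h3C'
  | @stit5 j A =>
      intro m h _
      rw [sat_imp]; intro h1
      intro h2 C hC hhC h2C
      rw [JstitModel.Sat]
      intro h2st
      apply h1
      intro h3 C' hC' hhC' h3C'
      have hCC' : C = C' := M.choice_disjoint m j C C' hC hC' ⟨h, hhC, hhC'⟩
      subst hCC'
      exact h2st h3 C hC h2C h3C'
  | @a2 j A =>
      intro m h _
      rw [sat_imp]; intro h1
      intro h' C hC _ hh'C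
      exact h1 h' (M.choice_cell_sub m j C hC hh'C)
  | @a3 p L hnd =>
      intro m h hh
      rw [sat_imp]; intro hant
      rw [sat_andList] at hant
      have hsat : ∀ q ∈ p :: L, ∃ hq ∈ M.toTemporalFrame.H m, M.Sat (Form.stit q.1 q.2) m hq := by
        intro q hq
        rcases List.mem_cons.1 hq with rfl | hqL
        · exact sat_dia.1 hant.1
        · have := hant.2 _ (List.mem_map.2 ⟨q, hqL, rfl⟩)
          exact sat_dia.1 this
      have hcell : ∀ q ∈ p :: L, ∃ C, C ∈ M.choice m q.1 ∧ ∀ h' ∈ C, M.Sat q.2 m h' := by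
        intro q hq
        obtain ⟨hq', hq'H, hstit⟩ := hsat q hq
        obtain ⟨C, hC, hqC⟩ := M.choice_cover m q.1 hq' hq'H
        exact ⟨C, hC, fun h' h'C => hstit h' C hC hqC h'C⟩
      choose C0 hC01 _ using fun j => M.choice_cover m j h hh
      have hsel : ∀ j : Ag, ∃ C, C ∈ M.choice m j ∧
          (∀ q ∈ p :: L, q.1 = j → ∀ h' ∈ C, M.Sat q.2 m h') := by
        intro j
        by_cases hj : ∃ q ∈ p :: L, q.1 = j
        · obtain ⟨q, hq, rfl⟩ := hj
          obtain ⟨C, hC, hsat⟩ := hcell q hq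
          refine ⟨C, hC, ?_⟩
          intro q' hq' heq h' h'C
          have hqq : q' = q := List.inj_on_of_nodup_map hnd hq' hq heq
          subst hqq
          exact hsat h' h'C
        · exact ⟨C0 j, hC01 j, fun q' hq' heq _ _ => absurd ⟨q', hq', heq⟩ hj⟩
      choose f hf1 hf2 using hsel
      obtain ⟨hstar, hstarmem⟩ := M.independence m f hf1
      have hstarf : ∀ j, hstar ∈ f j := fun j => Set.mem_iInter.1 hstarmem j
      have hstarH : hstar ∈ M.toTemporalFrame.H m :=
        M.choice_cell_sub m p.1 (f p.1) (hf1 p.1) (hstarf p.1)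
      have hkey : ∀ q ∈ p :: L, M.Sat (Form.stit q.1 q.2) m hstar := by
        intro q hq
        intro h2 C' hC' hstarC' h2C'
        have hCg : C' = f q.1 :=
          M.choice_disjoint m q.1 C' (f q.1) hC' (hf1 q.1) ⟨hstar, hstarC', hstarf q.1⟩
        exact hf2 q.1 q hq rfl h2 (hCg ▸ h2C')
      rw [sat_dia]
      refine ⟨hstar, hstarH, sat_andList.2 ⟨hkey p List.mem_cons_self, ?_⟩⟩
      intro B hB
      obtain ⟨q, hqL, rfl⟩ := List.mem_map.1 hB
      exact hkey q (List.mem_cons_of_mem p hqL)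
  | @a4 s t A B =>
      intro m h _
      rw [sat_imp]; intro h1; rw [sat_imp]; intro h2
      refine ⟨M.ev_app m s t A B h1.1 h2.1, fun m' h' hre hh' => ?_⟩
      exact sat_imp.1 (h1.2 m' h' hre hh') (h2.2 m' h' hre hh')
  | @a5 t A =>
      intro m h _
      rw [sat_imp]; intro h1
      rw [sat_and]
      constructor
      · refine ⟨M.ev_bang m t A h1.1, fun m' h' hre hh' => ?_⟩
        exact ⟨M.ev_mono m m' t hre h1.1,
          fun m'' h'' hre' hh'' => h1.2 m'' h'' (M.Re_trans hre hre') hh''⟩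
      · intro m' h' hr hh'
        exact h1.2 m' h' (M.R_sub_Re hr) hh'
  | @a6 s t A =>
      intro m h _
      rw [sat_imp]; intro h1
      rcases sat_or.1 h1 with h2 | h2
      · exact ⟨M.ev_sum_left m s t h2.1, h2.2⟩
      · exact ⟨M.ev_sum_right m s t h2.1, h2.2⟩
  | @knowK A B =>
      intro m h _
      rw [sat_imp]; intro h1; rw [sat_imp]; intro h2
      intro m' h' hr hh'
      exact sat_imp.1 (h1 m' h' hr hh') (h2 m' h' hr hh')
  | @knowT A =>
      intro m h hh
      rw [sat_imp]; intro h1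
      exact h1 m h (M.R_refl m) hh
  | @know4 A =>
      intro m h _
      rw [sat_imp]; intro h1
      intro m' h' hr hh' m'' h'' hr' hh''
      exact h1 m'' h'' (M.R_trans hr hr') hh''
  | @a8 A =>
      intro m h _
      rw [sat_imp]; intro h1
      intro h' _ m' h'' hr _ h''' hh'''
      exact h1 m' h''' hr hh'''
  | @a9 t =>
      intro m h _
      rw [sat_imp]; intro h1
      intro m' h' hr _ h'' hh''
      exact M.transparent m m' t (M.R_sub_Re hr) (fun g hg => h1 g hg) h'' hh''

end JstitModel

end AxValid
section Soundness

namespace JstitModel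

open Classical TemporalFrame

variable {Mo Ag PVar PConst PropVar : Type} [Inhabited PropVar]
variable {M : JstitModel Mo Ag PVar PConst PropVar}
variable {CS : Set (Form Ag PVar PConst PropVar)}

lemma constIter_shape {B : Form Ag PVar PConst PropVar} (h : ConstIter B) :
    ∃ (c : PConst) (B' : Form Ag PVar PConst PropVar), B = Form.proves (Pol.const c) B' := by
  cases h with
  | base hAx => exact ⟨_, _, rfl⟩
  | step hB => exact ⟨_, _, rfl⟩

lemma cs_valid (hCS : IsConstSpec CS) (hN : CSNormal CS M)
    {B : Form Ag PVar PConst PropVar} (hB : B ∈ CS) : M.Valid B := by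
  have hci := hCS.1 B hB
  revert hB
  induction hci with
  | @base c A hAx =>
      intro hB m h hh
      exact ⟨hN c m _ hB, fun m' h' _ hh' => ax_valid hAx m' h' hh'⟩
  | @step c B' hB' ih =>
      intro hB m h hh
      obtain ⟨c', B'', rfl⟩ := constIter_shape hB'
      have hmem : Form.proves (Pol.const c') B'' ∈ CS := hCS.2 c c' B'' hB
      exact ⟨hN c m _ hB, fun m' h' _ hh' => ih hmem m' h' hh'⟩

lemma rd_sound (hMS : M.toTemporalFrame.MixSucc)
    {A : Form Ag PVar PConst PropVar} {ts ss : List (Pol PVar PConst)}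
    (hprem : M.Valid (Form.imp (Form.know A)
      (bigOr ((ts.map fun t => Form.neg (Form.box (Form.ann t))) ++
              (ss.map fun s => Form.box (Form.ann s)))))) :
    M.Valid (Form.imp (Form.know A)
      (bigOr ((ts.map fun t => Form.neg (Form.ann t)) ++
              (ss.map fun s => Form.ann s)))) := by
  intro m h hh
  rw [sat_imp]; intro hKA
  by_contra hcon
  rw [sat_bigOr] at hcon; push_neg at hcon
  have hts : ∀ t ∈ ts, t ∈ M.act m h := by
    intro t ht
    by_contra hno
    exact hcon _ (List.mem_append_left _ (List.mem_map.2 ⟨t, ht, rfl⟩)) hno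
  have hss : ∀ s ∈ ss, s ∉ M.act m h := by
    intro s hs hmem
    exact hcon _ (List.mem_append_right _ (List.mem_map.2 ⟨s, hs, rfl⟩)) hmem
  -- a uniform way to refute the disjunction at `m` when `act` is constant on `H m`
  have refute_at_m : (∀ h' ∈ M.toTemporalFrame.H m, M.act m h' = M.act m h) → False := by
    intro hconst
    have hdisj := sat_imp.1 (hprem m h hh) hKA
    rw [sat_bigOr] at hdisj
    obtain ⟨B, hB, hSatB⟩ := hdisj
    rcases List.mem_append.1 hB with hBt | hBs
    · obtain ⟨t, ht, rfl⟩ := List.mem_map.1 hBt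
      apply hSatB
      intro h'' hh''
      show t ∈ M.act m h''
      rw [hconst h'' hh'']
      exact hts t ht
    · obtain ⟨s, hs, rfl⟩ := List.mem_map.1 hBs
      exact hss s hs (hSatB h hh)
  by_cases hmax : ∃ m1, M.toTemporalFrame.lt m m1
  · obtain ⟨m1, hm1⟩ := hmax
    obtain ⟨x, hxh, hmx⟩ := exists_gt_of_lt hm1 hh
    rcases hMS m x with hnext | hundiv
    · obtain ⟨m2, hm2x, hnm2⟩ := hnext hmx
      have hm2h : m2 ∈ h := mem_of_le hm2x (hist_of_mem_H hh) hxh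
      have hhm2 : h ∈ M.toTemporalFrame.H m2 := ⟨hist_of_mem_H hh, hm2h⟩
      have hKA2 : M.Sat (Form.know A) m2 h :=
        fun m' h' hr hh' => hKA m' h' (M.R_trans (M.le_sub_R hnm2.1.1) hr) hh'
      have hdisj := sat_imp.1 (hprem m2 h hhm2) hKA2
      rw [sat_bigOr] at hdisj
      obtain ⟨B, hB, hSatB⟩ := hdisj
      rcases List.mem_append.1 hB with hBt | hBs
      · obtain ⟨t, ht, rfl⟩ := List.mem_map.1 hBt
        apply hSatB
        intro h'' hh''2
        have hh''m : h'' ∈ M.toTemporalFrame.H m := H_mono hnm2.1.1 hh''2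
        have hund : M.toTemporalFrame.Undiv m h h'' :=
          ⟨m2, hnm2.1, hm2h, mem_of_mem_H hh''2⟩
        have hacteq := M.divide m h h'' hh hh''m hund
        have htm : t ∈ M.act m h'' := hacteq ▸ hts t ht
        exact M.expansion m2 m h'' hnm2.1 hh''2 htm
      · obtain ⟨s, hs, rfl⟩ := List.mem_map.1 hBs
        obtain ⟨m', h'', hm'm2, hh''m2, hsact⟩ := M.no_new m2 s (fun g hg => hSatB g hg)
        have hm'm : M.le m' m := hnm2.2 m' hm'm2
        have hh''m : h'' ∈ M.toTemporalFrame.H m := H_mono hnm2.1.1 hh''m2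
        have hsm : s ∈ M.act m h'' := by
          by_cases he : m' = m
          · exact he ▸ hsact
          · exact M.expansion m m' h'' ⟨hm'm, he⟩ hh''m hsact
        have hund : M.toTemporalFrame.Undiv m h'' h :=
          ⟨m2, hnm2.1, mem_of_mem_H hh''m2, hm2h⟩
        have hacteq := M.divide m h'' h hh''m hh hund
        exact hss s hs (hacteq ▸ hsm)
    · exact refute_at_m fun h' hh' =>
        M.divide m h' h hh' hh (hundiv h' hh' h hh)
  · push_neg at hmax
    exact refute_at_m fun h' hh' => by
      rw [history_eq_of_maximal hmax hh hh']

theorem soundness (hCS : IsConstSpec CS) (hMS : M.toTemporalFrame.MixSucc)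
    (hN : CSNormal CS M) {A : Form Ag PVar PConst PropVar}
    (hp : Proves CS A) : M.Valid A := by
  induction hp with
  | ax hAx => exact fun m h hh => ax_valid hAx m h hh
  | mp h1 h2 ih1 ih2 => exact fun m h hh => sat_imp.1 (ih1 m h hh) (ih2 m h hh)
  | nec h ih => exact fun m h hh m' h' _ hh' => ih m' h' hh'
  | rd hne hp ih => exact rd_sound hMS ih
  | rcs hB => exact cs_valid hCS hN hB

end JstitModel

end Soundness
section Hilbert

variable {Ag PVar PConst PropVar : Type} [Inhabited PropVar]
variable {CS : Set (Form Ag PVar PConst PropVar)}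
variable {X Y Z A B : Form Ag PVar PConst PropVar}

lemma taut_syll : Tautology (Form.imp (Form.imp X Y)
    (Form.imp (Form.imp Y Z) (Form.imp X Z))) := by
  intro v hand hneg
  simp only [Form.imp, hand, hneg]
  cases hx : v X <;> cases hy : v Y <;> cases hz : v Z <;> rfl

lemma proves_syll (h1 : Proves CS (Form.imp X Y)) (h2 : Proves CS (Form.imp Y Z)) :
    Proves CS (Form.imp X Z) :=
  Proves.mp (Proves.mp (Proves.ax (Ax.a0 taut_syll)) h1) h2

lemma proves_boxNec (h : Proves CS A) : Proves CS (Form.box A) :=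
  Proves.mp (Proves.ax Ax.knowT)
    (Proves.mp (Proves.ax Ax.boxT)
      (Proves.mp (Proves.ax Ax.a8) (Proves.nec h)))

lemma proves_boxMono (h : Proves CS (Form.imp X Y)) :
    Proves CS (Form.imp (Form.box X) (Form.box Y)) :=
  Proves.mp (Proves.ax Ax.boxK) (proves_boxNec h)

lemma proves_knowToBox : Proves CS (Form.imp (Form.know B) (Form.box B)) :=
  proves_syll (Proves.ax Ax.a8)
    (proves_syll (proves_boxMono (Proves.ax Ax.knowT)) (Proves.ax Ax.boxT))

lemma taut_assemble {P Q Q' R R' : Form Ag PVar PConst PropVar} :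
    Tautology (Form.imp (Form.imp P (Form.imp Q' R'))
      (Form.imp (Form.imp Q Q') (Form.imp (Form.imp R' R)
        (Form.imp P (Form.or (Form.neg Q) R))))) := by
  intro v hand hneg
  simp only [Form.imp, Form.or, hand, hneg]
  cases h1 : v P <;> cases h2 : v Q <;> cases h3 : v Q' <;> cases h4 : v R <;>
    cases h5 : v R' <;> rfl

/-- The premise of the distinguishing (R_D) instance is provable. -/
lemma proves_premise (t s : Pol PVar PConst) :
    Proves CS (Form.imp
      (Form.know (Form.imp (Form.box (Form.ann t)) (Form.box (Form.ann s))))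
      (Form.or (Form.neg (Form.box (Form.ann t))) (Form.box (Form.ann s)))) := by
  have P3 : Proves CS (Form.imp
      (Form.know (Form.imp (Form.box (Form.ann t)) (Form.box (Form.ann s))))
      (Form.imp (Form.box (Form.box (Form.ann t))) (Form.box (Form.box (Form.ann s))))) :=
    proves_syll proves_knowToBox (Proves.ax Ax.boxK)
  exact Proves.mp (Proves.mp (Proves.mp (Proves.ax (Ax.a0 taut_assemble)) P3)
    (Proves.ax Ax.box4)) (Proves.ax Ax.boxT)

/-- The distinguishing theorem of Σ_D(CS), obtained by (R_D). -/
lemma proves_G (t s : Pol PVar PConst) :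
    Proves CS (Form.imp
      (Form.know (Form.imp (Form.box (Form.ann t)) (Form.box (Form.ann s))))
      (Form.or (Form.neg (Form.ann t)) (Form.ann s))) := by
  have h := Proves.rd (CS := CS)
    (A := Form.imp (Form.box (Form.ann t)) (Form.box (Form.ann s)))
    (ts := [t]) (ss := [s]) (by simp) ?_
  · exact h
  · exact proves_premise t s

end Hilbert

section Main

open TemporalFrame JstitModel

set_option maxHeartbeats 1000000 in
/-- Theorem 3: every CS-normal jstit model based on a stit frame `C`
validates all theorems of Σ_D(CS) iff `C` is a mixed successor frame. -/
theorem stmt10 {Mo Ag PVar PConst PropVar : Type} [Finite Ag]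
    [Countable PVar] [Infinite PVar] [Countable PConst] [Infinite PConst]
    [Countable PropVar] [Infinite PropVar] [Inhabited PropVar]
    (C : StitFrame Mo Ag)
    (CS : Set (Form Ag PVar PConst PropVar)) (hCS : IsConstSpec CS) :
    (∀ M : JstitModel Mo Ag PVar PConst PropVar,
        M.toJstitFrame.toStitFrame = C → CSNormal CS M →
        ∀ A : Form Ag PVar PConst PropVar, Proves CS A → M.Valid A) ↔
      C.toTemporalFrame.MixSucc := by
  constructor
  · -- validity of all theorems implies the mixed successor condition
    intro hL m m1
    by_contra hcon
    push_neg at hcon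
    obtain ⟨⟨hlt, hnonext⟩, h0, hh0, g0, hg0, hndv⟩ := hcon
    set T := C.toTemporalFrame with hT
    -- two distinct proof polynomials
    obtain ⟨x, y, hxy⟩ := exists_pair_ne PVar
    set t : Pol PVar PConst := Pol.var x with hts1
    set s : Pol PVar PConst := Pol.var y with hts2
    have hts : t ≠ s := by
      intro h; rw [hts1, hts2] at h; exact hxy (Pol.var.inj h)
    -- a history through m1 (hence through m)
    obtain ⟨h1, hh1m1⟩ := exists_history (T := T) m1
    have hh1m : h1 ∈ T.H m := H_mono hlt.1 hh1m1
    -- the undividedness class of h1 at m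
    set D : Set (Set Mo) := {k | k ∈ T.H m ∧ T.Undiv m h1 k} with hD
    have hh1D : h1 ∈ D := ⟨hh1m, ⟨m1, hlt, mem_of_mem_H hh1m1, mem_of_mem_H hh1m1⟩⟩
    -- a history through m outside D
    have hgex : ∃ g, g ∈ T.H m ∧ g ∉ D := by
      by_cases hc0 : h0 ∈ D
      · refine ⟨g0, hg0, fun hc1 => hndv ?_⟩
        exact undiv_trans (hist_of_mem_H hh0) (hist_of_mem_H hh1m) (hist_of_mem_H hg0)
          (undiv_symm hc0.2) hc1.2
      · exact ⟨h0, hh0, hc0⟩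
    obtain ⟨gs, hgH, hgnD⟩ := hgex
    -- transfer of D-membership along undividedness above m
    have hDtrans : ∀ {n k k'}, T.le m n → k ∈ T.H n → k' ∈ T.H n →
        T.Undiv n k k' → k ∈ D → k' ∈ D := by
      intro n k k' hmn hk hk' hu hkD
      obtain ⟨p, hnp, hpk, hpk'⟩ := hu
      have hmp : T.lt m p := lt_of_le_of_lt hmn hnp
      have hk'm : k' ∈ T.H m := H_mono (T.le_trans hmn hnp.1) ⟨hist_of_mem_H hk', hpk'⟩
      refine ⟨hk'm, ?_⟩
      exact undiv_trans (hist_of_mem_H hh1m) (hist_of_mem_H hkD.1) (hist_of_mem_H hk'm)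
        hkD.2 ⟨p, hmp, hpk, hpk'⟩
    -- the act function of the countermodel
    set actF : Mo → Set Mo → Set (Pol PVar PConst) := fun n k =>
      {u | (u = t ∧ T.le m n ∧ k ∈ D) ∨ (u = s ∧ T.lt m n ∧ k ∈ D)} with hactF
    -- the countermodel
    set M : JstitModel Mo Ag PVar PConst PropVar := {
      toStitFrame := C
      R := C.le
      Re := C.le
      R_refl := C.le_refl
      R_trans := fun h1 h2 => C.le_trans h1 h2
      Re_refl := C.le_refl
      Re_trans := fun h1 h2 => C.le_trans h1 h2
      R_sub_Re := fun h => h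
      le_sub_R := fun h => h
      act := actF
      ev := fun _ _ => Set.univ
      val := fun _ => ∅
      ev_mono := fun _ _ _ _ => Set.Subset.rfl
      ev_app := fun _ _ _ _ _ _ _ => Set.mem_univ _
      ev_sum_left := fun _ _ _ => Set.subset_univ _
      ev_sum_right := fun _ _ _ => Set.subset_univ _
      ev_bang := fun _ _ _ _ => Set.mem_univ _
      expansion := by
        intro n n' k hlt' hk u hu
        rcases hu with ⟨rfl, hmn', hkD⟩ | ⟨rfl, hmn', hkD⟩
        · exact Or.inl ⟨rfl, T.le_trans hmn' hlt'.1, hkD⟩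
        · exact Or.inr ⟨rfl, lt_of_lt_of_le hmn' hlt'.1, hkD⟩
      no_new := by
        intro n u hall
        obtain ⟨k, hk⟩ := exists_history (T := T) n
        have hu := hall k hk
        rcases hu with ⟨rfl, hmn, hkD⟩ | ⟨rfl, hmn, hkD⟩
        · -- u = t
          by_cases he : m = n
          · subst he
            rcases hall gs hgH with ⟨_, _, hgD⟩ | ⟨heq, _, _⟩
            · exact absurd hgD hgnD
            · exact absurd heq hts
          · exact ⟨m, k, ⟨hmn, he⟩, hk, Or.inl ⟨rfl, C.le_refl m, hkD⟩⟩
        · -- u = s : density below n inside the class of h1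
          have hnk : n ∈ k := mem_of_mem_H hk
          have hexmid : ∃ n', T.lt m n' ∧ T.lt n' n := by
            by_contra hno
            have hnx : T.Next m n :=
              next_of_no_between hmn (fun n' hc => hno ⟨n', hc⟩)
            obtain ⟨p, hmp, hph1, hpk⟩ := hkD.2
            have hcase : n ∈ h1 ∨ (T.lt m p ∧ T.lt p n) := by
              by_cases hpn : p = n
              · exact Or.inl (hpn ▸ hph1)
              · rcases (hist_of_mem_H hk).chain hpk hnk hpn with hle | hle
                · exact Or.inr ⟨hmp, hle, hpn⟩
                · exact Or.inl (mem_of_le hle (hist_of_mem_H hh1m) hph1)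
            rcases hcase with hnh1 | ⟨hi1, hi2⟩
            · by_cases hnm1 : n = m1
              · exact hnonext n (hnm1 ▸ T.le_refl m1) hnx
              · rcases (hist_of_mem_H hh1m).chain hnh1 (mem_of_mem_H hh1m1) hnm1 with hle | hle
                · exact hnonext n hle hnx
                · exact hno ⟨m1, hlt, hle, fun he => hnm1 he.symm⟩
            · exact hno ⟨p, hi1, hi2⟩
          obtain ⟨n', hmn', hn'n⟩ := hexmid
          exact ⟨n', k, hn'n, hk, Or.inr ⟨rfl, hmn', hkD⟩⟩
      divide := by
        intro n k k' hk hk' hu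
        by_cases hmn : T.le m n
        · have h1d : k ∈ D → k' ∈ D := hDtrans hmn hk hk' hu
          have h2d : k' ∈ D → k ∈ D := hDtrans hmn hk' hk (undiv_symm hu)
          ext u
          constructor
          · rintro (⟨rfl, ha, hb⟩ | ⟨rfl, ha, hb⟩)
            · exact Or.inl ⟨rfl, ha, h1d hb⟩
            · exact Or.inr ⟨rfl, ha, h1d hb⟩
          · rintro (⟨rfl, ha, hb⟩ | ⟨rfl, ha, hb⟩)
            · exact Or.inl ⟨rfl, ha, h2d hb⟩
            · exact Or.inr ⟨rfl, ha, h2d hb⟩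
        · ext u
          constructor
          · rintro (⟨rfl, ha, _⟩ | ⟨rfl, ha, _⟩)
            · exact absurd ha hmn
            · exact absurd ha.1 hmn
          · rintro (⟨rfl, ha, _⟩ | ⟨rfl, ha, _⟩)
            · exact absurd ha hmn
            · exact absurd ha.1 hmn
      transparent := by
        intro n n' u hnn' hall k' hk'
        have hk'n : k' ∈ T.H n := H_mono hnn' hk'
        rcases hall k' hk'n with ⟨rfl, hmn, hD'⟩ | ⟨rfl, hmn, hD'⟩
        · exact Or.inl ⟨rfl, T.le_trans hmn hnn', hD'⟩
        · exact Or.inr ⟨rfl, lt_of_lt_of_le hmn hnn', hD'⟩ } with hM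
    have hnorm : CSNormal CS M := fun _ _ _ _ => Set.mem_univ _
    have hval := hL M rfl hnorm _ (proves_G (CS := CS) t s)
    have hsat := hval m h1 hh1m
    rw [JstitModel.sat_imp] at hsat
    have hK : M.Sat (Form.know (Form.imp (Form.box (Form.ann t))
        (Form.box (Form.ann s)))) m h1 := by
      intro n k hr hk
      rw [JstitModel.sat_imp]
      intro hboxt
      have hne : m ≠ n := by
        rintro rfl
        rcases hboxt gs hgH with ⟨_, _, hgD⟩ | ⟨heq, _, _⟩
        · exact hgnD hgD
        · exact hts heq
      intro k'' hk''
      rcases hboxt k'' hk'' with ⟨_, _, hD'⟩ | ⟨_, _, hD'⟩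
      · exact Or.inr ⟨rfl, ⟨hr, hne⟩, hD'⟩
      · exact Or.inr ⟨rfl, ⟨hr, hne⟩, hD'⟩
    have hfin := hsat hK
    rw [JstitModel.sat_or] at hfin
    rcases hfin with hc | hc
    · exact hc (Or.inl ⟨rfl, C.le_refl m, hh1D⟩)
    · rcases hc with ⟨heq, _, _⟩ | ⟨_, hltmm, _⟩
      · exact hts heq.symm
      · exact hltmm.2 rfl
  · -- soundness over mixed successor frames
    intro hMS M hMC hN A hp
    have hMS' : M.toTemporalFrame.MixSucc := by
      have : M.toTemporalFrame = C.toTemporalFrame :=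
        congrArg StitFrame.toTemporalFrame hMC
      rw [this]
      exact hMS
    exact JstitModel.soundness hCS hMS' hN hp

end Main
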